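/- Assume m + p ≠ 2. Then a point (X,Y,Z) ∈ ℝ³ with X ≥ 0 and Z ≥ 0 is an equilibrium of the system (PSsyst1) — that is, X((m−1)Y − 2X) = 0, −Y² − (β/α)Y + X − NXY − Z = 0 and Z((m+p−2)Y + (σ−2)X) = 0 — if and only if (X,Y,Z) is one of the three points P0 = (0,0,0), P1 = (0, −β/α, 0), P2 = ((m−1)/(2α(mN−N+2)), 1/(α(mN−N+2)), 0). -/
import Mathlib


open Real Filter Set Topology

noncomputable def alphaC (m p σ : ℝ) : ℝ := (σ + 2) / (σ * (m - 1) + 2 * (p - 1))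

noncomputable def betaC (m p σ : ℝ) : ℝ := (m - p) / (σ * (m - 1) + 2 * (p - 1))

set_option maxHeartbeats 1000000 in
theorem equilibria_mp_ne_two (m p σ : ℝ) (N : ℕ) (hm : 1 < m) (hp0 : 0 < p) (hp1 : p < 1)
    (hσ : 2 * (1 - p) / (m - 1) < σ) (hN : 1 ≤ N)
    (hmp : m + p ≠ 2) :
    ∀ X Y Z : ℝ, 0 ≤ X → 0 ≤ Z →
      ((X * ((m - 1) * Y - 2 * X) = 0 ∧
        -Y ^ 2 - betaC m p σ / alphaC m p σ * Y + X - (N : ℝ) * X * Y - Z = 0 ∧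
        Z * ((m + p - 2) * Y + (σ - 2) * X) = 0) ↔
      ((X, Y, Z) = ((0 : ℝ), (0 : ℝ), (0 : ℝ)) ∨
        (X, Y, Z) = ((0 : ℝ), -(betaC m p σ / alphaC m p σ), (0 : ℝ)) ∨
        (X, Y, Z) = ((m - 1) / (2 * alphaC m p σ * (m * (N : ℝ) - (N : ℝ) + 2)),
          1 / (alphaC m p σ * (m * (N : ℝ) - (N : ℝ) + 2)), (0 : ℝ)))) := by
  intro X Y Z hX hZ
  have hm1 : (0:ℝ) < m - 1 := by linarith
  have hp' : (0:ℝ) < 1 - p := by linarith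
  have hσ0 : (0:ℝ) < σ := lt_trans (by positivity) hσ
  have hL : 0 < σ * (m - 1) + 2 * (p - 1) := by
    rw [div_lt_iff₀ hm1] at hσ; nlinarith
  have hσ2 : (0:ℝ) < σ + 2 := by linarith
  have hNR : (0:ℝ) ≤ (N:ℝ) := Nat.cast_nonneg N
  have hK : (0:ℝ) < m * (N:ℝ) - (N:ℝ) + 2 := by nlinarith
  have hLne : σ * (m - 1) + 2 * (p - 1) ≠ 0 := ne_of_gt hL
  have hσ2ne : σ + 2 ≠ 0 := ne_of_gt hσ2
  have hKne : m * (N:ℝ) - (N:ℝ) + 2 ≠ 0 := ne_of_gt hK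
  have ha : alphaC m p σ = (σ + 2) / (σ * (m - 1) + 2 * (p - 1)) := rfl
  have hc : betaC m p σ / alphaC m p σ = (m - p) / (σ + 2) := by
    rw [alphaC, betaC]; field_simp
  have hmp2 : m + p - 2 ≠ 0 := fun h => hmp (by linarith)
  constructor
  · rintro ⟨h1, h2, h3⟩
    rw [hc] at h2
    have h2' : -(Y ^ 2 * (σ + 2)) - (m - p) * Y + X * (σ + 2)
        - (σ + 2) * ((N:ℝ) * X * Y) - (σ + 2) * Z = 0 := by
      field_simp at h2; linear_combination h2
    rcases mul_eq_zero.mp h1 with hX0 | hXY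
    · subst hX0
      rcases mul_eq_zero.mp h3 with hZ0 | hY3
      · subst hZ0
        have hfac : Y * (Y * (σ + 2) + (m - p)) = 0 := by linear_combination -h2'
        rcases mul_eq_zero.mp hfac with hY0 | hYc
        · exact Or.inl (by rw [hY0])
        · refine Or.inr (Or.inl ?_)
          rw [hc]
          have : Y = -((m - p) / (σ + 2)) := by
            field_simp; linarith
          rw [this]
      · have hY0 : Y = 0 := by
          have : (m + p - 2) * Y = 0 := by linarith [hY3]
          rcases mul_eq_zero.mp this with h | h
          · exact absurd h hmp2
          · exact h
        subst hY0
        have hZ0 : Z = 0 := by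
          have : (σ + 2) * Z = 0 := by linear_combination -h2'
          rcases mul_eq_zero.mp this with h | h
          · exact absurd h hσ2ne
          · exact h
        exact Or.inl (by rw [hZ0])
    · have hXY' : (m - 1) * Y = 2 * X := by linarith
      rcases eq_or_lt_of_le hX with hX0 | hXpos
      · have hY0 : Y = 0 := by
          have h2X : (m - 1) * Y = 0 := by rw [hXY', ← hX0]; ring
          rcases mul_eq_zero.mp h2X with h | h
          · exact absurd h (ne_of_gt hm1)
          · exact h
        have hZ0 : Z = 0 := by
          have : (σ + 2) * Z = 0 := by
            rw [← hX0, hY0] at h2'; linear_combination -h2'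
          rcases mul_eq_zero.mp this with h | h
          · exact absurd h hσ2ne
          · exact h
        exact Or.inl (by rw [← hX0, hY0, hZ0])
      · have hYpos : 0 < Y := by nlinarith
        have hZ0 : Z = 0 := by
          rcases mul_eq_zero.mp h3 with h | h
          · exact h
          · exfalso
            have key : X * (σ * (m - 1) + 2 * (p - 1)) = 0 := by
              linear_combination (m - 1) * h - (m + p - 2) * hXY'
            nlinarith [mul_pos hXpos hL]
        subst hZ0
        have hQ : Y * (Y * ((σ + 2) * (m * (N:ℝ) - (N:ℝ) + 2)) -
            (σ * (m - 1) + 2 * (p - 1))) = 0 := by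
          linear_combination (-2 : ℝ) * h2' + (-(σ + 2) * (1 - (N:ℝ) * Y)) * hXY'
        have hYval : Y * ((σ + 2) * (m * (N:ℝ) - (N:ℝ) + 2)) =
            σ * (m - 1) + 2 * (p - 1) := by
          rcases mul_eq_zero.mp hQ with h | h
          · exact absurd h (ne_of_gt hYpos)
          · linarith
        refine Or.inr (Or.inr ?_)
        simp only [Prod.mk.injEq]
        refine ⟨?_, ?_, by simp⟩
        · rw [ha]; field_simp
          linear_combination (-(σ + 2) * (m * (N:ℝ) - (N:ℝ) + 2)) * hXY'
            + (m - 1) * hYval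
        · rw [ha]; field_simp
          linear_combination hYval
  · rintro (h | h | h) <;>
      simp only [Prod.mk.injEq] at h <;>
      obtain ⟨hX0, hY0, hZ0⟩ := h <;> subst hX0 <;> subst hY0 <;> subst hZ0
    · exact ⟨by ring, by ring, by ring⟩
    · exact ⟨by ring, by rw [hc]; ring, by ring⟩
    · refine ⟨?_, ?_, by ring⟩
      · rw [ha]; field_simp; ring
      · rw [hc, ha]; field_simp; ring
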